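/- For every list S over Γ, every index i < 2·|S| + 1, and every element c : Option Γ, the sentence obtained by one replacement in the expanded sentence is within Levenshtein distance 1 of S: d_lev(S, ψ((φ(S)).set i c)) ≤ 1. -/

import Mathlib

/-- The expansion map: insert the special symbol `ξ` (encoded as `none`)
before and after every character of `S`. -/
def phi {Γ : Type*} (S : List Γ) : List (Option Γ) :=
  none :: S.flatMap (fun c => [some c, none])

/-- The contraction map: remove all occurrences of `ξ` (encoded as `none`). -/
def psi {Γ : Type*} (T : List (Option Γ)) : List Γ :=
  T.filterMap id

/-- Mathlib's former `Levenshtein.Cost` (removed from Mathlib), restored verbatim. -/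
structure Levenshtein.Cost (α β δ : Type*) where
  delete : α → δ
  insert : β → δ
  substitute : α → β → δ

/-- Mathlib's former `Levenshtein.defaultCost`, restored verbatim. -/
def Levenshtein.defaultCost {α : Type*} [DecidableEq α] : Levenshtein.Cost α α ℕ where
  delete _ := 1
  insert _ := 1
  substitute a b := if a = b then 0 else 1

/-- Mathlib's former `Levenshtein.impl`, restored. -/
def Levenshtein.impl {α β δ : Type*} [AddZeroClass δ] [Min δ] (C : Levenshtein.Cost α β δ)
    (xs : List α) (y : β) (d : {r : List δ // 0 < r.length}) : {r : List δ // 0 < r.length} :=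
  let ⟨ds, w⟩ := d
  xs.zip (ds.zip ds.tail) |>.foldr
    (init := ⟨[C.insert y + ds.getLast (List.ne_nil_of_length_pos w)], by simp⟩)
    (fun ⟨x, d₀, d₁⟩ ⟨r, w⟩ =>
      ⟨min (C.delete x + r[0]) (min (C.insert y + d₀) (C.substitute x y + d₁)) :: r, by simp⟩)

/-- Mathlib's former `suffixLevenshtein`, restored. -/
def suffixLevenshtein {α β δ : Type*} [AddZeroClass δ] [Min δ] (C : Levenshtein.Cost α β δ)
    (xs : List α) (ys : List β) : {r : List δ // 0 < r.length} :=
  ys.foldr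
    (Levenshtein.impl C xs)
    (xs.foldr (init := ⟨[0], by simp⟩) (fun a ⟨r, w⟩ => ⟨(C.delete a + r[0]) :: r, by simp⟩))

/-- Mathlib's former `levenshtein`, restored. -/
def levenshtein {α β δ : Type*} [AddZeroClass δ] [Min δ] (C : Levenshtein.Cost α β δ)
    (xs : List α) (ys : List β) : δ :=
  let ⟨r, w⟩ := suffixLevenshtein C xs ys
  r[0]

/-- The Levenshtein (edit) distance with unit costs. -/
def dlev {Γ : Type*} [DecidableEq Γ] (S S' : List Γ) : ℕ :=
  levenshtein Levenshtein.defaultCost S S'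

section portlev
variable {α β δ : Type*} [AddZeroClass δ] [Min δ] (C : Levenshtein.Cost α β δ)

theorem Levenshtein.impl_cons_port (x : α) (xs : List α) (y : β) (d : δ) (ds : List δ)
    (w : 0 < (d :: ds).length) (w' : 0 < List.length ds) :
    Levenshtein.impl C (x :: xs) y ⟨d :: ds, w⟩ =
      let ⟨r, w⟩ := Levenshtein.impl C xs y ⟨ds, w'⟩
      ⟨min (C.delete x + r[0]) (min (C.insert y + d) (C.substitute x y + ds[0])) :: r, by simp⟩ :=
  match ds, w' with | _ :: _, _ => rfl

theorem Levenshtein.impl_length_port (xs : List α) (y : β) (d : {r : List δ // 0 < r.length})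
    (w : d.1.length = xs.length + 1) :
    (Levenshtein.impl C xs y d).1.length = xs.length + 1 := by
  induction xs generalizing d with
  | nil => rfl
  | cons x xs ih =>
    match d, w with
    | ⟨d₁ :: d₂ :: ds, _⟩, w =>
      rw [Levenshtein.impl_cons_port (w' := by simp)]
      simp only [List.length_cons, Nat.add_right_cancel_iff]
      exact ih ⟨d₂ :: ds, (by simp)⟩ (by simpa using w)

theorem suffixLevenshtein_length_port (xs : List α) (ys : List β) :
    (suffixLevenshtein C xs ys).1.length = xs.length + 1 := by
  induction ys with
  | nil =>
    dsimp [suffixLevenshtein]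
    induction xs with
    | nil => rfl
    | cons _ xs ih => simp_all
  | cons y ys ih =>
    dsimp [suffixLevenshtein]
    rw [Levenshtein.impl_length_port]
    exact ih

theorem suffixLevenshtein_cons₁_port (x : α) (xs : List α) (ys : List β) :
    suffixLevenshtein C (x :: xs) ys =
      ⟨levenshtein C (x :: xs) ys :: (suffixLevenshtein C xs ys).1, by simp⟩ := by
  induction ys with
  | nil => rfl
  | cons y ys ih =>
    have h2 : ∀ zs : List α, suffixLevenshtein C zs (y :: ys) =
        Levenshtein.impl C zs y (suffixLevenshtein C zs ys) := fun _ => rfl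
    have aux : ∀ {a b : {r : List δ // 0 < r.length}},
        a.1[0]'a.2 = b.1[0]'b.2 → a.1.tail = b.1.tail → a = b := by
      intro a b h1 h2
      match a, b with
      | ⟨hx :: tx, _⟩, ⟨hy :: ty, _⟩ => simp_all
    apply aux
    · rfl
    · rw [h2 (x :: xs), ih, Levenshtein.impl_cons_port]
      · rfl
      · simp [suffixLevenshtein_length_port]

theorem levenshtein_eq_headD_port (xs : List α) (ys : List β) :
    levenshtein C xs ys = (suffixLevenshtein C xs ys).1.headD 0 := by
  unfold levenshtein
  generalize suffixLevenshtein C xs ys = s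
  rcases s with ⟨_ | ⟨a, r⟩, hw⟩
  · simp at hw
  · rfl

theorem Levenshtein.impl_cons_fst_port (x : α) (xs : List α) (y : β) (d : δ) (ds : List δ)
    (w : 0 < (d :: ds).length) (w' : 0 < List.length ds) :
    (Levenshtein.impl C (x :: xs) y ⟨d :: ds, w⟩).1 =
      min (C.delete x + (Levenshtein.impl C xs y ⟨ds, w'⟩).1.headD 0)
        (min (C.insert y + d) (C.substitute x y + ds.headD 0)) ::
        (Levenshtein.impl C xs y ⟨ds, w'⟩).1 := by
  rw [Levenshtein.impl_cons_port (w' := w')]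
  cases ds with
  | nil => simp at w'
  | cons d2 ds =>
    generalize Levenshtein.impl C xs y ⟨d2 :: ds, w'⟩ = s
    rcases s with ⟨_ | ⟨a, r⟩, hw⟩
    · simp at hw
    · rfl

@[simp]
theorem levenshtein_cons_cons (x : α) (xs : List α) (y : β) (ys : List β) :
    levenshtein C (x :: xs) (y :: ys) =
      min (C.delete x + levenshtein C xs (y :: ys))
        (min (C.insert y + levenshtein C (x :: xs) ys)
          (C.substitute x y + levenshtein C xs ys)) := by
  rw [levenshtein_eq_headD_port C (x :: xs) (y :: ys)]
  rw [show suffixLevenshtein C (x :: xs) (y :: ys) =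
    Levenshtein.impl C (x :: xs) y (suffixLevenshtein C (x :: xs) ys) from rfl]
  rw [suffixLevenshtein_cons₁_port C x xs ys]
  rw [Levenshtein.impl_cons_fst_port (w' := (suffixLevenshtein C xs ys).2)]
  rw [levenshtein_eq_headD_port C xs (y :: ys), levenshtein_eq_headD_port C xs ys]
  rfl

@[simp]
theorem levenshtein_nil_nil : levenshtein C [] [] = 0 := rfl

@[simp]
theorem levenshtein_nil_single_port (y : β) : levenshtein C [] [y] = C.insert y + 0 := rfl

@[simp]
theorem levenshtein_single_nil_port (x : α) : levenshtein C [x] [] = C.delete x + 0 := rfl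

end portlev

section aux
variable {Γ : Type*} [DecidableEq Γ]

lemma dlev_self (S : List Γ) : dlev S S = 0 := by
  induction S with
  | nil => rfl
  | cons a S ih =>
    simp [dlev, Levenshtein.defaultCost] at ih ⊢
    omega

lemma dlev_cons_right_le (a : Γ) (S : List Γ) : dlev S (a :: S) ≤ 1 := by
  have h := dlev_self (Γ := Γ) S
  cases S with
  | nil => simp [dlev, Levenshtein.defaultCost]
  | cons b S =>
    simp only [dlev, levenshtein_cons_cons] at h ⊢
    simp [Levenshtein.defaultCost] at h ⊢
    omega

lemma dlev_cons_left_le (a : Γ) (S : List Γ) : dlev (a :: S) S ≤ 1 := by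
  have h := dlev_self (Γ := Γ) S
  cases S with
  | nil => simp [dlev, Levenshtein.defaultCost]
  | cons b S =>
    simp only [dlev, levenshtein_cons_cons] at h ⊢
    simp [Levenshtein.defaultCost] at h ⊢
    omega

lemma dlev_cons_cons_le (a b : Γ) (S : List Γ) : dlev (a :: S) (b :: S) ≤ 1 := by
  have h := dlev_self (Γ := Γ) S
  simp only [dlev, levenshtein_cons_cons] at h ⊢
  have : (Levenshtein.defaultCost.substitute a b : ℕ) ≤ 1 := by
    simp [Levenshtein.defaultCost]; split <;> omega
  omega

lemma dlev_cons_cons_same_le (a : Γ) (S T : List Γ) :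
    dlev (a :: S) (a :: T) ≤ dlev S T := by
  simp only [dlev, levenshtein_cons_cons]
  have : (Levenshtein.defaultCost.substitute a a : ℕ) = 0 := by
    simp [Levenshtein.defaultCost]
  omega

omit [DecidableEq Γ] in
lemma psi_flatMap (S : List Γ) :
    List.filterMap id (S.flatMap (fun c => [some c, none])) = S := by
  induction S with
  | nil => rfl
  | cons a S ih => simpa using ih

lemma dlev_toList_append_le (S : List Γ) (c : Option Γ) :
    dlev S (c.toList ++ S) ≤ 1 := by
  cases c with
  | none => simp [dlev_self]
  | some a => simpa using dlev_cons_right_le a S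

end aux

/-- One replacement in the expanded sentence stays within Levenshtein distance 1. -/
theorem dlev_set_phi_le_one {Γ : Type*} [DecidableEq Γ] (S : List Γ)
    (i : ℕ) (hi : i < 2 * S.length + 1) (c : Option Γ) :
    dlev S (psi ((phi S).set i c)) ≤ 1 := by
  induction S generalizing i with
  | nil =>
    obtain rfl : i = 0 := by simpa using hi
    cases c with
    | none => simp [phi, psi, dlev_self]
    | some a => simpa [phi, psi] using dlev_cons_right_le a ([] : List Γ)
  | cons a S ih =>
    have hphi : phi (a :: S) = none :: some a :: phi S := by
      simp [phi, List.flatMap_cons]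
    match i with
    | 0 =>
      rw [hphi]
      simp only [List.set_cons_zero]
      have : psi (c :: some a :: phi S) = c.toList ++ (a :: S) := by
        cases c <;> simp [psi, phi, psi_flatMap] <;> exact psi_flatMap S
      rw [this]
      exact dlev_toList_append_le _ _
    | 1 =>
      rw [hphi]
      simp only [List.set]
      have : psi (none :: c :: phi S) = c.toList ++ S := by
        cases c <;> simp [psi, phi, psi_flatMap] <;> exact psi_flatMap S
      rw [this]
      cases c with
      | none => simpa using dlev_cons_left_le a S
      | some b => simpa using dlev_cons_cons_le a b S
    | (n+2) =>
      rw [hphi]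
      simp only [List.set]
      have hpsi : psi (none :: some a :: (phi S).set n c) =
          a :: psi ((phi S).set n c) := by simp [psi]
      rw [hpsi]
      have hn : n < 2 * S.length + 1 := by simp at hi; omega
      calc dlev (a :: S) (a :: psi ((phi S).set n c))
          ≤ dlev S (psi ((phi S).set n c)) := dlev_cons_cons_same_le a _ _
        _ ≤ 1 := ih n hn
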